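/- Let σ and τ be NE-shape Wilf equivalent signed permutation matrices of size k. Then for every n ≥ 1 and every subset F ⊆ {1,…,n}, the number of signed involutions π ∈ SI_n avoiding σ' whose set of fixed points (positions i with |π_i| = i, i.e., indices i whose row and column of the matrix of π have their unique nonzero entry on the diagonal) equals F is the same as the number of signed involutions in SI_n avoiding τ' with fixed-point set F. In particular, |SI_n(σ')| = |SI_n(τ')| for every n, i.e., σ' and τ' are I-Wilf equivalent. -/

import Mathlib

open Matrix

/-- A signed permutation matrix: entries in {0,1,-1}, with exactly one nonzero
entry in each row and each column. -/
def IsSignedPermMatrix {n : ℕ} (M : Matrix (Fin n) (Fin n) ℤ) : Prop :=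
  (∀ i j, M i j = 0 ∨ M i j = 1 ∨ M i j = -1) ∧
  (∀ i, ∃! j, M i j ≠ 0) ∧
  (∀ j, ∃! i, M i j ≠ 0)

/-- `M` contains the pattern `τ`: some `k×k` submatrix of `M`, taken with rows
and columns in increasing order, equals `τ`. -/
def ContainsPattern {n k : ℕ} (M : Matrix (Fin n) (Fin n) ℤ)
    (τ : Matrix (Fin k) (Fin k) ℤ) : Prop :=
  ∃ r c : Fin k → Fin n, StrictMono r ∧ StrictMono c ∧
    ∀ a b, M (r a) (c b) = τ a b

/-- Block diagonal matrix [[A,0],[0,B]]. -/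
def blockDiag2 {a b : ℕ} (A : Matrix (Fin a) (Fin a) ℤ) (B : Matrix (Fin b) (Fin b) ℤ) :
    Matrix (Fin (a + b)) (Fin (a + b)) ℤ :=
  Matrix.reindex finSumFinEquiv finSumFinEquiv
    (Matrix.fromBlocks A (0 : Matrix (Fin a) (Fin b) ℤ) (0 : Matrix (Fin b) (Fin a) ℤ) B)

/-- Block diagonal matrix with three blocks. -/
def blockDiag3 {a b c : ℕ} (A : Matrix (Fin a) (Fin a) ℤ) (B : Matrix (Fin b) (Fin b) ℤ)
    (C : Matrix (Fin c) (Fin c) ℤ) : Matrix (Fin (a + b + c)) (Fin (a + b + c)) ℤ :=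
  blockDiag2 (blockDiag2 A B) C

/-- Block antidiagonal matrix [[0,A],[B,0]]. -/
def antiBlock2 {a b : ℕ} (A : Matrix (Fin a) (Fin a) ℤ) (B : Matrix (Fin b) (Fin b) ℤ) :
    Matrix (Fin (a + b)) (Fin (a + b)) ℤ :=
  Matrix.reindex finSumFinEquiv (finSumFinEquiv.trans (finCongr (Nat.add_comm b a)))
    (Matrix.fromBlocks (0 : Matrix (Fin a) (Fin b) ℤ) A B (0 : Matrix (Fin b) (Fin a) ℤ))

/-- For a signed permutation matrix σ, the involution σ' = [[0,σ],[σᵗ,0]]. -/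
def primePat {k : ℕ} (σ : Matrix (Fin k) (Fin k) ℤ) :
    Matrix (Fin (k + k)) (Fin (k + k)) ℤ :=
  Matrix.reindex finSumFinEquiv finSumFinEquiv
    (Matrix.fromBlocks (0 : Matrix (Fin k) (Fin k) ℤ) σ σ.transpose
      (0 : Matrix (Fin k) (Fin k) ℤ))

/-- For a signed permutation matrix σ, the involution σ'' = [[0,0,σ],[0,1,0],[σᵗ,0,0]]. -/
def doublePrimePat {k : ℕ} (σ : Matrix (Fin k) (Fin k) ℤ) :
    Matrix (Fin (k + (1 + k))) (Fin (k + (1 + k))) ℤ :=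
  Matrix.reindex ((Equiv.sumCongr (Equiv.refl (Fin k)) finSumFinEquiv).trans finSumFinEquiv)
    ((Equiv.sumCongr (Equiv.refl (Fin k)) finSumFinEquiv).trans finSumFinEquiv)
    (Matrix.fromBlocks
      (0 : Matrix (Fin k) (Fin k) ℤ)
      (Matrix.of fun (i : Fin k) (j : Fin 1 ⊕ Fin k) =>
        Sum.elim (fun _ => (0 : ℤ)) (fun j' => σ i j') j)
      (Matrix.of fun (i : Fin 1 ⊕ Fin k) (j : Fin k) =>
        Sum.elim (fun _ => (0 : ℤ)) (fun i' => σ.transpose i' j) i)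
      (Matrix.fromBlocks (1 : Matrix (Fin 1) (Fin 1) ℤ) 0 0 (0 : Matrix (Fin k) (Fin k) ℤ)))

/-- β_k, the antidiagonal k×k permutation matrix (pattern k(k-1)…1). -/
def betaMat (k : ℕ) : Matrix (Fin k) (Fin k) ℤ :=
  Matrix.of fun i j => if (i : ℕ) + (j : ℕ) + 1 = k then 1 else 0

/-- |SI_n(τ)|: the number of τ-avoiding signed involutions of size n. -/
noncomputable def SIAvoidCount (n : ℕ) {k : ℕ} (τ : Matrix (Fin k) (Fin k) ℤ) : ℕ :=
  {M : Matrix (Fin n) (Fin n) ℤ |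
    IsSignedPermMatrix M ∧ M.IsSymm ∧ ¬ ContainsPattern M τ}.ncard

/-- |B_n(τ)|: the number of τ-avoiding signed permutations of size n. -/
noncomputable def BAvoidCount (n : ℕ) {k : ℕ} (τ : Matrix (Fin k) (Fin k) ℤ) : ℕ :=
  {M : Matrix (Fin n) (Fin n) ℤ | IsSignedPermMatrix M ∧ ¬ ContainsPattern M τ}.ncard

/-- An NE-shape: a top-right justified diagram with weakly decreasing row
lengths, i.e. the reflection of a Young diagram through a vertical axis. -/
structure NEShape where
  width : ℕ
  cells : Finset (ℕ × ℕ)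
  col_lt : ∀ p ∈ cells, p.2 < width
  upRight : ∀ p ∈ cells, ∀ i j : ℕ, i ≤ p.1 → p.2 ≤ j → j < width → (i, j) ∈ cells

/-- A sparse filling of an NE-shape. -/
def NEIsSparseFilling (S : NEShape) (f : ℕ × ℕ → ℤ) : Prop :=
  (∀ p, f p ≠ 0 → p ∈ S.cells) ∧
  (∀ p, f p = 0 ∨ f p = 1 ∨ f p = -1) ∧
  (∀ i, {j : ℕ | f (i, j) ≠ 0}.Subsingleton) ∧
  (∀ j, {i : ℕ | f (i, j) ≠ 0}.Subsingleton)

/-- A signed transversal of an NE-shape. -/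
def NEIsSignedTransversal (S : NEShape) (f : ℕ × ℕ → ℤ) : Prop :=
  NEIsSparseFilling S f ∧
  (∀ i, (∃ j, (i, j) ∈ S.cells) → ∃ j, f (i, j) ≠ 0) ∧
  (∀ j, (∃ i, (i, j) ∈ S.cells) → ∃ i, f (i, j) ≠ 0)

/-- A filling of an NE-shape contains the pattern τ. -/
def NEContains (S : NEShape) (f : ℕ × ℕ → ℤ) {k : ℕ}
    (τ : Matrix (Fin k) (Fin k) ℤ) : Prop :=
  ∃ r c : Fin k → ℕ, StrictMono r ∧ StrictMono c ∧
    (∀ a b, (r a, c b) ∈ S.cells) ∧ (∀ a b, f (r a, c b) = τ a b)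

/-- NE-shape Wilf equivalence of two signed permutation matrices. -/
def NEShapeWilfEquiv {k l : ℕ} (σ : Matrix (Fin k) (Fin k) ℤ)
    (τ : Matrix (Fin l) (Fin l) ℤ) : Prop :=
  ∀ S : NEShape,
    {f : ℕ × ℕ → ℤ | NEIsSignedTransversal S f ∧ ¬ NEContains S f σ}.ncard =
    {f : ℕ × ℕ → ℤ | NEIsSignedTransversal S f ∧ ¬ NEContains S f τ}.ncard


/-! ### Auxiliary development -/

section Aux

open scoped Classical

lemma ncard_eq_sum_fibers {α β : Type*} [Fintype β] {s : Set α} (hs : s.Finite) (g : α → β) :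
    s.ncard = ∑ b : β, (s ∩ g ⁻¹' {b}).ncard := by
  classical
  have key : ∀ b : β, (s ∩ g ⁻¹' {b}) = ↑(hs.toFinset.filter fun a => g a = b) := by
    intro b; ext x
    simp [Set.Finite.mem_toFinset, and_comm]
  rw [Set.ncard_eq_toFinset_card s hs]
  rw [Finset.card_eq_sum_card_fiberwise (f := g) (t := Finset.univ) (fun x _ => Finset.mem_univ _)]
  refine Finset.sum_congr rfl fun b _ => ?_
  rw [key b, Set.ncard_coe_finset]

lemma spm_setFinite {n : ℕ} (s : Set (Matrix (Fin n) (Fin n) ℤ))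
    (hs : ∀ M ∈ s, IsSignedPermMatrix M) : s.Finite := by
  have h2 : ({0, 1, -1} : Set ℤ).Finite := by
    exact (Set.finite_singleton (-1)).insert 1 |>.insert 0
  have h1 : s ⊆ Set.univ.pi (fun _ : Fin n => Set.univ.pi fun _ : Fin n => ({0,1,-1} : Set ℤ)) := by
    intro M hM
    intro i _
    intro j _
    rcases (hs M hM).1 i j with h | h | h <;> simp [h]
  exact (Set.Finite.pi fun _ => Set.Finite.pi fun _ => h2).subset h1

lemma unique_of_spm {n : ℕ} {M : Matrix (Fin n) (Fin n) ℤ} (hM : IsSignedPermMatrix M)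
    {i : Fin n} {j j' : Fin n} (h : M i j ≠ 0) (h' : M i j' ≠ 0) : j = j' := by
  obtain ⟨j0, _, hu⟩ := hM.2.1 i
  rw [hu j h, hu j' h']

lemma unique_col_of_spm {n : ℕ} {M : Matrix (Fin n) (Fin n) ℤ} (hM : IsSignedPermMatrix M)
    {j : Fin n} {i i' : Fin n} (h : M i j ≠ 0) (h' : M i' j ≠ 0) : i = i' := by
  obtain ⟨i0, _, hu⟩ := hM.2.2 j
  rw [hu i h, hu i' h']

/-! ### primePat entries -/

lemma primePat_ll {k : ℕ} (σ : Matrix (Fin k) (Fin k) ℤ) (a b : Fin k) :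
    primePat σ (Fin.castAdd k a) (Fin.castAdd k b) = 0 := by
  simp [primePat, Matrix.reindex_apply, Matrix.submatrix_apply,
    finSumFinEquiv_symm_apply_castAdd]

lemma primePat_lr {k : ℕ} (σ : Matrix (Fin k) (Fin k) ℤ) (a b : Fin k) :
    primePat σ (Fin.castAdd k a) (Fin.natAdd k b) = σ a b := by
  rw [primePat, Matrix.reindex_apply, Matrix.submatrix_apply,
    finSumFinEquiv_symm_apply_castAdd, finSumFinEquiv_symm_apply_natAdd]
  rfl

lemma primePat_rl {k : ℕ} (σ : Matrix (Fin k) (Fin k) ℤ) (a b : Fin k) :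
    primePat σ (Fin.natAdd k a) (Fin.castAdd k b) = σ b a := by
  rw [primePat, Matrix.reindex_apply, Matrix.submatrix_apply,
    finSumFinEquiv_symm_apply_castAdd, finSumFinEquiv_symm_apply_natAdd]
  rfl

lemma primePat_rr {k : ℕ} (σ : Matrix (Fin k) (Fin k) ℤ) (a b : Fin k) :
    primePat σ (Fin.natAdd k a) (Fin.natAdd k b) = 0 := by
  rw [primePat, Matrix.reindex_apply, Matrix.submatrix_apply,
    finSumFinEquiv_symm_apply_natAdd, finSumFinEquiv_symm_apply_natAdd]
  rfl

/-! ### Symmetry reduction: containing σ' in a symmetric signed permutation matrix -/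

lemma contains_primePat_iff {n k : ℕ} {M : Matrix (Fin n) (Fin n) ℤ}
    {σ : Matrix (Fin k) (Fin k) ℤ}
    (hM : IsSignedPermMatrix M) (hsym : M.IsSymm) (hσ : IsSignedPermMatrix σ) :
    ContainsPattern M (primePat σ) ↔
      ∃ r c : Fin k → Fin n, StrictMono r ∧ StrictMono c ∧ (∀ a b, r a < c b) ∧
        ∀ a b, M (r a) (c b) = σ a b := by
  constructor
  · rintro ⟨r, c, hr, hc, hval⟩
    rcases Nat.eq_zero_or_pos k with hk | hk
    · subst hk
      exact ⟨Fin.elim0, Fin.elim0, fun a => a.elim0, fun a => a.elim0,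
        fun a => a.elim0, fun a => a.elim0⟩
    · set a0 : Fin k := ⟨k - 1, by omega⟩ with ha0
      set b0 : Fin k := ⟨0, hk⟩ with hb0
      by_cases h : r (Fin.castAdd k a0) < c (Fin.natAdd k b0)
      · refine ⟨fun a => r (Fin.castAdd k a), fun b => c (Fin.natAdd k b),
          hr.comp (Fin.strictMono_castAdd k), hc.comp (Fin.strictMono_natAdd k), ?_, ?_⟩
        · intro a b
          calc r (Fin.castAdd k a) ≤ r (Fin.castAdd k a0) := by
                apply hr.monotone
                rw [Fin.le_def]; simp only [Fin.coe_castAdd, ha0, Fin.val_mk]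
                omega
            _ < c (Fin.natAdd k b0) := h
            _ ≤ c (Fin.natAdd k b) := by
                apply hc.monotone
                rw [Fin.le_def]; simp only [Fin.coe_natAdd, hb0, Fin.val_mk]; omega
        · intro a b
          have := hval (Fin.castAdd k a) (Fin.natAdd k b)
          rwa [primePat_lr] at this
      · push_neg at h
        refine ⟨fun a => c (Fin.castAdd k a), fun b => r (Fin.natAdd k b),
          hc.comp (Fin.strictMono_castAdd k), hr.comp (Fin.strictMono_natAdd k), ?_, ?_⟩
        · intro a b
          calc c (Fin.castAdd k a) ≤ c (Fin.castAdd k a0) := by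
                apply hc.monotone; rw [Fin.le_def]; simp only [Fin.coe_castAdd, ha0, Fin.val_mk]; omega
            _ < c (Fin.natAdd k b0) := by
                apply hc; simp [Fin.lt_def]; omega
            _ ≤ r (Fin.castAdd k a0) := h
            _ < r (Fin.natAdd k b0) := by
                apply hr; simp [Fin.lt_def]; omega
            _ ≤ r (Fin.natAdd k b) := by
                apply hr.monotone; rw [Fin.le_def]; simp only [Fin.coe_natAdd, hb0, Fin.val_mk]; omega
        · intro a b
          have := hval (Fin.natAdd k b) (Fin.castAdd k a)
          rw [primePat_rl] at this
          rw [hsym.apply, this]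
  · rintro ⟨r, c, hr, hc, hsep, hval⟩
    have hRmono : StrictMono (fun i : Fin (k + k) => Sum.elim r c (finSumFinEquiv.symm i)) := by
      intro i j hij
      obtain ⟨si, rfl⟩ := finSumFinEquiv.surjective i
      obtain ⟨sj, rfl⟩ := finSumFinEquiv.surjective j
      simp only [Equiv.symm_apply_apply]
      rcases si with a | a <;> rcases sj with b | b <;>
        simp only [Sum.elim_inl, Sum.elim_inr]
      · apply hr
        simp only [finSumFinEquiv_apply_left, Fin.lt_def, Fin.coe_castAdd] at hij
        exact Fin.lt_def.mpr hij
      · exact hsep a b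
      · exfalso
        simp only [finSumFinEquiv_apply_left, finSumFinEquiv_apply_right, Fin.lt_def,
          Fin.coe_castAdd, Fin.coe_natAdd] at hij
        omega
      · apply hc
        simp only [finSumFinEquiv_apply_right, Fin.lt_def, Fin.coe_natAdd] at hij
        exact Fin.lt_def.mpr (by omega)
    refine ⟨fun i => Sum.elim r c (finSumFinEquiv.symm i),
            fun i => Sum.elim r c (finSumFinEquiv.symm i), hRmono, hRmono, ?_⟩
    · intro i j
      obtain ⟨si, rfl⟩ := finSumFinEquiv.surjective i
      obtain ⟨sj, rfl⟩ := finSumFinEquiv.surjective j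
      rcases si with a | a <;> rcases sj with b | b <;>
        simp only [Equiv.symm_apply_apply, Sum.elim_inl, Sum.elim_inr,
          finSumFinEquiv_apply_left, finSumFinEquiv_apply_right,
          finSumFinEquiv_symm_apply_castAdd, finSumFinEquiv_symm_apply_natAdd]
      · rw [primePat_ll]
        obtain ⟨j0, hj0, _⟩ := hσ.2.1 a
        have hnz : M (r a) (c j0) ≠ 0 := by rw [hval]; exact hj0
        by_contra hzz
        have := unique_of_spm hM hzz hnz
        exact absurd (this ▸ hsep b j0) (lt_irrefl _)
      · rw [primePat_lr]; exact hval a b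
      · rw [primePat_rl, hsym.apply]; exact hval b a
      · rw [primePat_rr]
        obtain ⟨i0, hi0, _⟩ := hσ.2.2 b
        have hnz : M (r i0) (c b) ≠ 0 := by rw [hval]; exact hi0
        by_contra hzz
        have := unique_col_of_spm hM hzz hnz
        exact absurd (this ▸ hsep i0 a) (lt_irrefl _)

end Aux

section Fibers

open scoped Classical

variable {n : ℕ}

noncomputable def scard (A : Set (Fin n)) : ℕ := A.toFinite.toFinset.card

noncomputable def enumSet (A : Set (Fin n)) : ℕ → ℕ := fun r =>
  if h : r < scard A then ((A.toFinite.toFinset.orderIsoOfFin rfl ⟨r, h⟩ : Fin n) : ℕ)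
  else n + r

lemma enumSet_lt {A : Set (Fin n)} {r : ℕ} (h : r < scard A) : enumSet A r < n := by
  simp only [enumSet, dif_pos h]
  exact (A.toFinite.toFinset.orderIsoOfFin rfl ⟨r, h⟩ : Fin n).isLt

lemma enumSet_strictMono (A : Set (Fin n)) : StrictMono (enumSet A) := by
  intro r s hrs
  by_cases hs : s < scard A
  · have hr : r < scard A := lt_trans hrs hs
    simp only [enumSet, dif_pos hr, dif_pos hs]
    have h2 := (A.toFinite.toFinset.orderIsoOfFin rfl).strictMono
      (show (⟨r, hr⟩ : Fin (scard A)) < ⟨s, hs⟩ from hrs)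
    exact h2
  · by_cases hr : r < scard A
    · simp only [enumSet, dif_pos hr, dif_neg hs]
      have := enumSet_lt hr
      simp only [enumSet, dif_pos hr] at this
      omega
    · simp only [enumSet, dif_neg hr, dif_neg hs]
      omega

lemma enumSet_mem {A : Set (Fin n)} {r : ℕ} (h : r < scard A) :
    ∃ i : Fin n, i ∈ A ∧ (i : ℕ) = enumSet A r := by
  refine ⟨(A.toFinite.toFinset.orderIsoOfFin rfl ⟨r, h⟩ : Fin n), ?_, ?_⟩
  · exact (Set.Finite.mem_toFinset _).1 (A.toFinite.toFinset.orderIsoOfFin rfl ⟨r, h⟩).2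
  · simp only [enumSet, dif_pos h]

lemma enumSet_surj {A : Set (Fin n)} {i : Fin n} (h : i ∈ A) :
    ∃ r, r < scard A ∧ enumSet A r = (i : ℕ) := by
  set y := (A.toFinite.toFinset.orderIsoOfFin rfl).symm ⟨i, (Set.Finite.mem_toFinset _).2 h⟩ with hy
  have hlt : (y : ℕ) < scard A := y.isLt
  refine ⟨(y : ℕ), hlt, ?_⟩
  simp only [enumSet]
  rw [dif_pos hlt]
  have h2 : (⟨(y : ℕ), hlt⟩ : Fin (scard A)) = y := rfl
  have h3 := congrArg (fun z : A.toFinite.toFinset => ((z : Fin n) : ℕ))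
    ((A.toFinite.toFinset.orderIsoOfFin rfl).apply_symm_apply ⟨i, (Set.Finite.mem_toFinset _).2 h⟩)
  exact h3

noncomputable def idxSet (A : Set (Fin n)) (i : Fin n) : ℕ :=
  if h : ∃ r, r < scard A ∧ enumSet A r = (i : ℕ) then h.choose else 0

lemma idxSet_spec {A : Set (Fin n)} {i : Fin n} (h : i ∈ A) :
    idxSet A i < scard A ∧ enumSet A (idxSet A i) = (i : ℕ) := by
  have he := enumSet_surj h
  rw [idxSet, dif_pos he]
  exact he.choose_spec

lemma idxSet_eq {A : Set (Fin n)} {i : Fin n} (hi : i ∈ A) {r : ℕ}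
    (h : enumSet A r = (i : ℕ)) : idxSet A i = r :=
  (enumSet_strictMono A).injective (by rw [(idxSet_spec hi).2, h])

noncomputable def shapeOf (O C : Set (Fin n)) : NEShape where
  width := scard C
  cells := ((Finset.range (scard O)) ×ˢ (Finset.range (scard C))).filter
      (fun p => enumSet O p.1 < enumSet C p.2)
  col_lt := by
    intro p hp
    simp only [Finset.mem_filter, Finset.mem_product, Finset.mem_range] at hp
    exact hp.1.2
  upRight := by
    intro p hp i j hi hj hjw
    simp only [Finset.mem_filter, Finset.mem_product, Finset.mem_range] at hp ⊢
    obtain ⟨⟨h1, h2⟩, h3⟩ := hp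
    refine ⟨⟨lt_of_le_of_lt hi h1, hjw⟩, ?_⟩
    calc enumSet O i ≤ enumSet O p.1 := (enumSet_strictMono O).monotone hi
      _ < enumSet C p.2 := h3
      _ ≤ enumSet C j := (enumSet_strictMono C).monotone hj

lemma mem_shapeOf {O C : Set (Fin n)} {p : ℕ × ℕ} :
    p ∈ (shapeOf O C).cells ↔
      p.1 < scard O ∧ p.2 < scard C ∧ enumSet O p.1 < enumSet C p.2 := by
  simp [shapeOf, Finset.mem_filter, Finset.mem_product, Finset.mem_range, and_assoc]

noncomputable def matNat (M : Matrix (Fin n) (Fin n) ℤ) : ℕ → ℕ → ℤ := fun i j =>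
  if h : i < n ∧ j < n then M ⟨i, h.1⟩ ⟨j, h.2⟩ else 0

noncomputable def fillOf (O C : Set (Fin n)) (M : Matrix (Fin n) (Fin n) ℤ) : ℕ × ℕ → ℤ :=
  fun p => if p ∈ (shapeOf O C).cells then matNat M (enumSet O p.1) (enumSet C p.2) else 0

/-- The set of non-fixed, non-opener positions (closers). -/
def Cset (F O : Set (Fin n)) : Set (Fin n) := {i | i ∉ F ∧ i ∉ O}

noncomputable def matOf (F P O : Set (Fin n)) (f : ℕ × ℕ → ℤ) :
    Matrix (Fin n) (Fin n) ℤ := fun i j =>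
  if i = j then (if i ∈ P then 1 else if i ∈ F then -1 else 0)
  else if i ∈ O ∧ j ∈ Cset F O ∧ i < j then f (idxSet O i, idxSet (Cset F O) j)
  else if j ∈ O ∧ i ∈ Cset F O ∧ j < i then f (idxSet O j, idxSet (Cset F O) i)
  else 0

lemma fillOf_cell {O C : Set (Fin n)} (M : Matrix (Fin n) (Fin n) ℤ) {p : ℕ × ℕ}
    (hp : p ∈ (shapeOf O C).cells) :
    ∃ o c : Fin n, o ∈ O ∧ c ∈ C ∧ (o : ℕ) = enumSet O p.1 ∧ (c : ℕ) = enumSet C p.2 ∧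
      o < c ∧ fillOf O C M p = M o c := by
  obtain ⟨h1, h2, h3⟩ := mem_shapeOf.1 hp
  obtain ⟨o, ho, hov⟩ := enumSet_mem h1
  obtain ⟨c, hc, hcv⟩ := enumSet_mem h2
  refine ⟨o, c, ho, hc, hov, hcv, ?_, ?_⟩
  · rw [Fin.lt_def, hov, hcv]; exact h3
  · rw [fillOf, if_pos hp, matNat, dif_pos ⟨enumSet_lt h1, enumSet_lt h2⟩]
    congr 1 <;> [exact (Fin.ext hov.symm) ; exact (Fin.ext hcv.symm)]

lemma cell_of_mem {O : Set (Fin n)} {C : Set (Fin n)} {o c : Fin n}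
    (ho : o ∈ O) (hc : c ∈ C) (hoc : o < c) :
    (idxSet O o, idxSet C c) ∈ (shapeOf O C).cells := by
  rw [mem_shapeOf]
  exact ⟨(idxSet_spec ho).1, (idxSet_spec hc).1,
    by rw [(idxSet_spec ho).2, (idxSet_spec hc).2]; exact hoc⟩

lemma fillOf_apply_idx {O C : Set (Fin n)} (M : Matrix (Fin n) (Fin n) ℤ) {o c : Fin n}
    (ho : o ∈ O) (hc : c ∈ C) (hoc : o < c) :
    fillOf O C M (idxSet O o, idxSet C c) = M o c := by
  rw [fillOf, if_pos (cell_of_mem ho hc hoc), matNat]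
  have h1 := (idxSet_spec ho).2
  have h2 := (idxSet_spec hc).2
  have hb : enumSet O (idxSet O o) < n ∧ enumSet C (idxSet C c) < n :=
    ⟨by rw [h1]; exact o.isLt, by rw [h2]; exact c.isLt⟩
  rw [dif_pos hb]
  congr 1 <;> apply Fin.ext <;> simp [h1, h2]

end Fibers

section FiberLemmas

open scoped Classical

variable {n k : ℕ}

def Fiber (υ : Matrix (Fin k) (Fin k) ℤ) (F P O : Set (Fin n)) :
    Set (Matrix (Fin n) (Fin n) ℤ) :=
  {M | IsSignedPermMatrix M ∧ M.IsSymm ∧ ¬ ContainsPattern M (primePat υ) ∧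
       {i | M i i ≠ 0} = F ∧ {i | M i i = 1} = P ∧ {i | ∃ j, i < j ∧ M i j ≠ 0} = O}

lemma offdiag_class {F O : Set (Fin n)} {M : Matrix (Fin n) (Fin n) ℤ}
    (hM : IsSignedPermMatrix M) (hsym : M.IsSymm)
    (hF : {i | M i i ≠ 0} = F) (hO : {i | ∃ j, i < j ∧ M i j ≠ 0} = O)
    {i j : Fin n} (hij : i < j) (hne : M i j ≠ 0) : i ∈ O ∧ j ∈ Cset F O := by
  have hji : M j i ≠ 0 := by rw [hsym.apply]; exact hne
  refine ⟨?_, ?_, ?_⟩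
  · rw [← hO]; exact ⟨j, hij, hne⟩
  · rw [← hF]
    intro hjj
    exact absurd (unique_of_spm hM hjj hji) (ne_of_gt hij)
  · rw [← hO]
    rintro ⟨j', hjj', hne'⟩
    have := unique_of_spm hM hji hne'
    exact absurd (this ▸ hij) (not_lt_of_gt hjj')

lemma valid_of_fiber {υ : Matrix (Fin k) (Fin k) ℤ} {F P O : Set (Fin n)}
    {M : Matrix (Fin n) (Fin n) ℤ} (hM : M ∈ Fiber υ F P O) :
    P ⊆ F ∧ (∀ i ∈ O, i ∉ F) ∧ (∀ o ∈ O, ∃ c ∈ Cset F O, o < c) ∧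
      (∀ c ∈ Cset F O, ∃ o ∈ O, o < c) := by
  obtain ⟨hspm, hsym, _, hF, hP, hO⟩ := hM
  refine ⟨?_, ?_, ?_, ?_⟩
  · intro i hi
    rw [← hP] at hi
    rw [← hF]
    simp only [Set.mem_setOf_eq] at hi ⊢
    rw [hi]; exact one_ne_zero
  · intro i hi
    rw [← hO] at hi
    obtain ⟨j, hij, hne⟩ := hi
    rw [← hF]
    simp only [Set.mem_setOf_eq, not_not]
    by_contra hii
    exact absurd (unique_of_spm hspm hii hne) (ne_of_lt hij)
  · intro o ho
    rw [← hO] at ho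
    obtain ⟨j, hij, hne⟩ := ho
    exact ⟨j, (offdiag_class hspm hsym hF hO hij hne).2, hij⟩
  · intro c hc
    obtain ⟨hcF, hcO⟩ := hc
    have hcc : M c c = 0 := by
      by_contra h
      exact hcF (by rw [← hF]; exact h)
    obtain ⟨j, hj, _⟩ := hspm.2.1 c
    have hjc : j ≠ c := fun h => by rw [h] at hj; exact hj hcc
    rcases lt_or_gt_of_ne hjc with h | h
    · refine ⟨j, ?_, h⟩
      rw [← hO]
      exact ⟨c, h, by rw [hsym.apply]; exact hj⟩
    · exfalso
      exact hcO (by rw [← hO]; exact ⟨j, h, hj⟩)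

lemma col_exu_of_symm {M : Matrix (Fin n) (Fin n) ℤ} (hsym : M.IsSymm)
    (hrow : ∀ i, ∃! j, M i j ≠ 0) : ∀ j, ∃! i, M i j ≠ 0 := by
  intro j
  obtain ⟨i0, h1, h2⟩ := hrow j
  refine ⟨i0, show M i0 j ≠ 0 by rw [← hsym.apply]; exact h1,
    fun y hy => h2 y (show M j y ≠ 0 by rw [hsym.apply]; exact hy)⟩

end FiberLemmas

section BigForward

open scoped Classical

variable {n k : ℕ}

lemma fiber_props {υ : Matrix (Fin k) (Fin k) ℤ} (hυ : IsSignedPermMatrix υ)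
    {F P O : Set (Fin n)} {M : Matrix (Fin n) (Fin n) ℤ} (hM : M ∈ Fiber υ F P O) :
    NEIsSignedTransversal (shapeOf O (Cset F O)) (fillOf O (Cset F O) M) ∧
    ¬ NEContains (shapeOf O (Cset F O)) (fillOf O (Cset F O) M) υ ∧
    matOf F P O (fillOf O (Cset F O) M) = M := by
  obtain ⟨hspm, hsym, havoid, hF, hP, hO⟩ := hM
  set C := Cset F O with hC
  set f := fillOf O C M with hf
  have hsupp : ∀ p, f p ≠ 0 → p ∈ (shapeOf O C).cells := by
    intro p hp
    by_contra h
    rw [hf, fillOf, if_neg h] at hp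
    exact hp rfl
  have hval : ∀ p, f p = 0 ∨ f p = 1 ∨ f p = -1 := by
    intro p
    by_cases hp : p ∈ (shapeOf O C).cells
    · obtain ⟨o, c, _, _, _, _, _, he⟩ := fillOf_cell M hp
      rw [hf, he]
      exact hspm.1 o c
    · rw [hf, fillOf, if_neg hp]
      exact Or.inl rfl
  have hrowsub : ∀ i, {j : ℕ | f (i, j) ≠ 0}.Subsingleton := by
    intro i x hx y hy
    simp only [Set.mem_setOf_eq] at hx hy
    obtain ⟨o1, c1, ho1, hc1, hov1, hcv1, _, he1⟩ := fillOf_cell M (hsupp _ hx)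
    obtain ⟨o2, c2, ho2, hc2, hov2, hcv2, _, he2⟩ := fillOf_cell M (hsupp _ hy)
    have hoo : o1 = o2 := Fin.ext (hov1.trans hov2.symm)
    rw [hf, he1] at hx
    rw [hf, he2] at hy
    rw [hoo] at hx
    have hcc : c1 = c2 := unique_of_spm hspm hx hy
    apply (enumSet_strictMono C).injective
    rw [← hcv1, ← hcv2, hcc]
  have hcolsub : ∀ j, {i : ℕ | f (i, j) ≠ 0}.Subsingleton := by
    intro j x hx y hy
    simp only [Set.mem_setOf_eq] at hx hy
    obtain ⟨o1, c1, ho1, hc1, hov1, hcv1, _, he1⟩ := fillOf_cell M (hsupp _ hx)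
    obtain ⟨o2, c2, ho2, hc2, hov2, hcv2, _, he2⟩ := fillOf_cell M (hsupp _ hy)
    have hcc : c1 = c2 := Fin.ext (hcv1.trans hcv2.symm)
    rw [hf, he1] at hx
    rw [hf, he2] at hy
    rw [hcc] at hx
    have hoo : o1 = o2 := unique_col_of_spm hspm hx hy
    apply (enumSet_strictMono O).injective
    rw [← hov1, ← hov2, hoo]
  have hrows : ∀ i, (∃ j, (i, j) ∈ (shapeOf O C).cells) → ∃ j, f (i, j) ≠ 0 := by
    rintro i ⟨j, hij⟩
    have h1 : i < scard O := (mem_shapeOf.1 hij).1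
    obtain ⟨o, ho, hov⟩ := enumSet_mem h1
    have ho' : o ∈ {i | ∃ j, i < j ∧ M i j ≠ 0} := by rw [hO]; exact ho
    obtain ⟨j0, hoj0, hne⟩ := ho'
    have hj0C : j0 ∈ C := (offdiag_class hspm hsym hF hO hoj0 hne).2
    obtain ⟨s, hs, hsv⟩ := enumSet_surj hj0C
    refine ⟨s, ?_⟩
    have hcell : (i, s) ∈ (shapeOf O C).cells := by
      refine mem_shapeOf.2 ⟨h1, hs, ?_⟩
      rw [← hov, hsv]
      exact hoj0
    obtain ⟨o', c', _, _, hov', hcv', _, he'⟩ := fillOf_cell M hcell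
    have h2 : o' = o := Fin.ext (hov'.trans hov.symm)
    have h3 : c' = j0 := Fin.ext (hcv'.trans hsv)
    rw [hf, he', h2, h3]
    exact hne
  have hcols : ∀ j, (∃ i, (i, j) ∈ (shapeOf O C).cells) → ∃ i, f (i, j) ≠ 0 := by
    rintro j ⟨i, hij⟩
    have h2 : j < scard C := (mem_shapeOf.1 hij).2.1
    obtain ⟨c, hc, hcv⟩ := enumSet_mem h2
    obtain ⟨hcF, hcO⟩ := hc
    have hcc : M c c = 0 := by
      by_contra h
      exact hcF (by rw [← hF]; exact h)
    obtain ⟨j0, hj0, _⟩ := hspm.2.1 c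
    have hj0c : j0 ≠ c := fun h => by rw [h] at hj0; exact hj0 hcc
    rcases lt_or_gt_of_ne hj0c with h | h
    · have hj0O : j0 ∈ O := by
        rw [← hO]
        exact ⟨c, h, by rw [hsym.apply]; exact hj0⟩
      obtain ⟨r, hr, hrv⟩ := enumSet_surj hj0O
      refine ⟨r, ?_⟩
      have hcell : (r, j) ∈ (shapeOf O C).cells := by
        refine mem_shapeOf.2 ⟨hr, h2, ?_⟩
        rw [hrv, ← hcv]
        exact h
      obtain ⟨o', c', _, _, hov', hcv', _, he'⟩ := fillOf_cell M hcell
      have ha : o' = j0 := Fin.ext (hov'.trans hrv)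
      have hb : c' = c := Fin.ext (hcv'.trans hcv.symm)
      rw [hf, he', ha, hb, hsym.apply]
      exact hj0
    · exact absurd (show c ∈ O by rw [← hO]; exact ⟨j0, h, hj0⟩) hcO
  have havoidT : ¬ NEContains (shapeOf O C) f υ := by
    rintro ⟨ρ, γ, hρ, hγ, hcells, hvals⟩
    have hex1 : ∀ a : Fin k, ∃ o : Fin n, o ∈ O ∧ (o : ℕ) = enumSet O (ρ a) := fun a =>
      enumSet_mem (mem_shapeOf.1 (hcells a a)).1
    choose r hrO hrv using hex1
    have hex2 : ∀ b : Fin k, ∃ c : Fin n, c ∈ C ∧ (c : ℕ) = enumSet C (γ b) := fun b =>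
      enumSet_mem (mem_shapeOf.1 (hcells b b)).2.1
    choose c hcC hcv using hex2
    apply havoid
    rw [contains_primePat_iff hspm hsym hυ]
    refine ⟨r, c, ?_, ?_, ?_, ?_⟩
    · intro a a' haa
      rw [Fin.lt_def, hrv, hrv]
      exact (enumSet_strictMono O) (hρ haa)
    · intro b b' hbb
      rw [Fin.lt_def, hcv, hcv]
      exact (enumSet_strictMono C) (hγ hbb)
    · intro a b
      rw [Fin.lt_def, hrv, hcv]
      exact (mem_shapeOf.1 (hcells a b)).2.2
    · intro a b
      obtain ⟨o', c', _, _, hov', hcv', _, he'⟩ := fillOf_cell M (hcells a b)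
      have ha : o' = r a := Fin.ext (hov'.trans (hrv a).symm)
      have hb : c' = c b := Fin.ext (hcv'.trans (hcv b).symm)
      rw [← ha, ← hb, ← he']
      rw [hf] at hvals
      exact hvals a b
  have hmat : matOf F P O f = M := by
    ext i j
    show matOf F P O f i j = M i j
    rw [matOf]
    by_cases hij : i = j
    · rw [if_pos hij]
      subst hij
      by_cases hiP : i ∈ P
      · rw [if_pos hiP]
        rw [← hP] at hiP
        exact hiP.symm
      · rw [if_neg hiP]
        by_cases hiF : i ∈ F
        · rw [if_pos hiF]
          have h1 : M i i ≠ 0 := by rw [← hF] at hiF; exact hiF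
          have h2 : M i i ≠ 1 := fun h => hiP (by rw [← hP]; exact h)
          rcases hspm.1 i i with h | h | h
          · exact absurd h h1
          · exact absurd h h2
          · exact h.symm
        · rw [if_neg hiF]
          have h1 : M i i = 0 := by
            by_contra h
            exact hiF (by rw [← hF]; exact h)
          exact h1.symm
    · rw [if_neg hij]
      by_cases h1 : i ∈ O ∧ j ∈ Cset F O ∧ i < j
      · rw [if_pos h1, hf, fillOf_apply_idx M h1.1 h1.2.1 h1.2.2]
      · rw [if_neg h1]
        by_cases h2 : j ∈ O ∧ i ∈ Cset F O ∧ j < i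
        · rw [if_pos h2, hf, fillOf_apply_idx M h2.1 h2.2.1 h2.2.2]
          exact hsym.apply i j
        · rw [if_neg h2]
          by_contra h0
          have hMne : M i j ≠ 0 := fun h => h0 h.symm
          rcases lt_trichotomy i j with h | h | h
          · obtain ⟨ha, hb⟩ := offdiag_class hspm hsym hF hO h hMne
            exact h1 ⟨ha, hb, h⟩
          · exact hij h
          · have hji : M j i ≠ 0 := by rw [hsym.apply]; exact hMne
            obtain ⟨ha, hb⟩ := offdiag_class hspm hsym hF hO h hji
            exact h2 ⟨ha, hb, h⟩
  exact ⟨⟨⟨hsupp, hval, hrowsub, hcolsub⟩, hrows, hcols⟩, havoidT, hmat⟩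

end BigForward

section BigBackward

open scoped Classical

variable {n k : ℕ}

lemma matOf_fiber {υ : Matrix (Fin k) (Fin k) ℤ} (hυ : IsSignedPermMatrix υ)
    {F P O : Set (Fin n)} (hPF : P ⊆ F) (hOF : ∀ i ∈ O, i ∉ F)
    (hv1 : ∀ o ∈ O, ∃ c ∈ Cset F O, o < c) (hv2 : ∀ c ∈ Cset F O, ∃ o ∈ O, o < c)
    {f : ℕ × ℕ → ℤ} (hfT : NEIsSignedTransversal (shapeOf O (Cset F O)) f)
    (havoid : ¬ NEContains (shapeOf O (Cset F O)) f υ) :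
    matOf F P O f ∈ Fiber υ F P O ∧ fillOf O (Cset F O) (matOf F P O f) = f := by
  set C := Cset F O with hC
  set M := matOf F P O f with hM
  obtain ⟨⟨hsupp, hvalf, hrowsub, hcolsub⟩, hrows, hcols⟩ := hfT
  have mdiag : ∀ i : Fin n, M i i = if i ∈ P then 1 else if i ∈ F then -1 else 0 := by
    intro i; rw [hM, matOf, if_pos rfl]
  have mOC : ∀ {i j : Fin n}, i ∈ O → j ∈ C → i < j →
      M i j = f (idxSet O i, idxSet C j) := by
    intro i j hi hj hij
    rw [hM, matOf, if_neg (ne_of_lt hij), if_pos ⟨hi, hj, hij⟩]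
  have mCO : ∀ {i j : Fin n}, j ∈ O → i ∈ C → j < i →
      M i j = f (idxSet O j, idxSet C i) := by
    intro i j hj hi hij
    rw [hM, matOf, if_neg (ne_of_gt hij), if_neg ?_, if_pos ⟨hj, hi, hij⟩]
    rintro ⟨h1, _, _⟩
    exact hi.2 h1
  have mzero : ∀ {i j : Fin n}, i ≠ j → ¬(i ∈ O ∧ j ∈ C ∧ i < j) →
      ¬(j ∈ O ∧ i ∈ C ∧ j < i) → M i j = 0 := by
    intro i j h1 h2 h3
    rw [hM, matOf, if_neg h1, if_neg h2, if_neg h3]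
  have hclass : ∀ {i j : Fin n}, i ≠ j → M i j ≠ 0 →
      (i ∈ O ∧ j ∈ C ∧ i < j ∧ M i j = f (idxSet O i, idxSet C j)) ∨
      (j ∈ O ∧ i ∈ C ∧ j < i ∧ M i j = f (idxSet O j, idxSet C i)) := by
    intro i j hij hne
    by_cases h1 : i ∈ O ∧ j ∈ C ∧ i < j
    · exact Or.inl ⟨h1.1, h1.2.1, h1.2.2, mOC h1.1 h1.2.1 h1.2.2⟩
    by_cases h2 : j ∈ O ∧ i ∈ C ∧ j < i
    · exact Or.inr ⟨h2.1, h2.2.1, h2.2.2, mCO h2.1 h2.2.1 h2.2.2⟩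
    exact absurd (mzero hij h1 h2) hne
  have hsymm : M.IsSymm := by
    rw [Matrix.IsSymm]
    ext i j
    rw [Matrix.transpose_apply]
    rcases lt_trichotomy i j with h | h | h
    · by_cases hx : i ∈ O ∧ j ∈ C
      · rw [mCO hx.1 hx.2 h, mOC hx.1 hx.2 h]
      · rw [mzero (ne_of_gt h) (fun hc => absurd hc.2.2 (lt_asymm h)) (fun hc => hx ⟨hc.1, hc.2.1⟩),
            mzero (ne_of_lt h) (fun hc => hx ⟨hc.1, hc.2.1⟩) (fun hc => absurd hc.2.2 (lt_asymm h))]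
    · subst h; rfl
    · by_cases hx : j ∈ O ∧ i ∈ C
      · rw [mOC hx.1 hx.2 h, mCO hx.1 hx.2 h]
      · rw [mzero (ne_of_lt h) (fun hc => hx ⟨hc.1, hc.2.1⟩) (fun hc => absurd hc.2.2 (lt_asymm h)),
            mzero (ne_of_gt h) (fun hc => absurd hc.2.2 (lt_asymm h)) (fun hc => hx ⟨hc.1, hc.2.1⟩)]
  have hvals : ∀ i j, M i j = 0 ∨ M i j = 1 ∨ M i j = -1 := by
    intro i j
    by_cases hij : i = j
    · subst hij
      rw [mdiag]
      split_ifs <;> simp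
    · by_cases h1 : i ∈ O ∧ j ∈ C ∧ i < j
      · rw [mOC h1.1 h1.2.1 h1.2.2]; exact hvalf _
      · by_cases h2 : j ∈ O ∧ i ∈ C ∧ j < i
        · rw [mCO h2.1 h2.2.1 h2.2.2]; exact hvalf _
        · rw [mzero hij h1 h2]; exact Or.inl rfl
  have hOex : ∀ i : Fin n, i ∈ O → ∃ j : Fin n, i < j ∧ j ∈ C ∧ M i j ≠ 0 := by
    intro i hi
    obtain ⟨c0, hc0, hic0⟩ := hv1 i hi
    have hcell := cell_of_mem (C := C) hi hc0 hic0
    obtain ⟨s, hs⟩ := hrows (idxSet O i) ⟨idxSet C c0, hcell⟩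
    obtain ⟨h1, h2, h3⟩ := mem_shapeOf.1 (hsupp _ hs)
    obtain ⟨c, hcC, hcv⟩ := enumSet_mem h2
    have hic : i < c := by
      rw [Fin.lt_def, hcv, ← (idxSet_spec hi).2]
      exact h3
    refine ⟨c, hic, hcC, ?_⟩
    rw [mOC hi hcC hic, idxSet_eq hcC hcv.symm]
    exact hs
  have hCex : ∀ i : Fin n, i ∈ C → ∃ j : Fin n, j < i ∧ j ∈ O ∧ M i j ≠ 0 := by
    intro i hi
    obtain ⟨o0, ho0, ho0i⟩ := hv2 i hi
    have hcell := cell_of_mem ho0 hi ho0i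
    obtain ⟨r, hr⟩ := hcols (idxSet C i) ⟨idxSet O o0, hcell⟩
    obtain ⟨h1, h2, h3⟩ := mem_shapeOf.1 (hsupp _ hr)
    obtain ⟨o, hoO, hov⟩ := enumSet_mem h1
    have hoi : o < i := by
      rw [Fin.lt_def, hov, ← (idxSet_spec hi).2]
      exact h3
    refine ⟨o, hoi, hoO, ?_⟩
    rw [mCO hoO hi hoi, idxSet_eq hoO hov.symm]
    exact hr
  have hrowu : ∀ i : Fin n, ∃! j, M i j ≠ 0 := by
    intro i
    by_cases hiF : i ∈ F
    · refine ⟨i, ?_, ?_⟩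
      · show M i i ≠ 0
        rw [mdiag]
        by_cases hiP : i ∈ P
        · rw [if_pos hiP]; exact one_ne_zero
        · rw [if_neg hiP, if_pos hiF]; norm_num
      · intro y hy
        by_contra hne
        have hiy : i ≠ y := fun h => hne h.symm
        rcases hclass hiy hy with h | h
        · exact hOF i h.1 hiF
        · exact h.2.1.1 hiF
    · by_cases hiO : i ∈ O
      · obtain ⟨c, hic, hcC, hne⟩ := hOex i hiO
        refine ⟨c, hne, ?_⟩
        intro y hy
        have hyne : i ≠ y := by
          rintro rfl
          rw [mdiag i, if_neg (fun h => hiF (hPF h)), if_neg hiF] at hy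
          exact hy rfl
        rcases hclass hyne hy with h | h
        · have h1 : idxSet C y ∈ {j : ℕ | f (idxSet O i, j) ≠ 0} := by
            show f (idxSet O i, idxSet C y) ≠ 0
            rw [← h.2.2.2]; exact hy
          have h2 : idxSet C c ∈ {j : ℕ | f (idxSet O i, j) ≠ 0} := by
            show f (idxSet O i, idxSet C c) ≠ 0
            rw [← mOC hiO hcC hic]; exact hne
          have h3 := hrowsub (idxSet O i) h1 h2
          have h4 := congrArg (enumSet C) h3
          rw [(idxSet_spec h.2.1).2, (idxSet_spec hcC).2] at h4
          exact Fin.ext h4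
        · exact absurd hiO h.2.1.2
      · have hiC : i ∈ C := ⟨hiF, hiO⟩
        obtain ⟨o, hoi, hoO, hne⟩ := hCex i hiC
        refine ⟨o, hne, ?_⟩
        intro y hy
        have hyne : i ≠ y := by
          rintro rfl
          rw [mdiag i, if_neg (fun h => hiF (hPF h)), if_neg hiF] at hy
          exact hy rfl
        rcases hclass hyne hy with h | h
        · exact absurd h.1 hiO
        · have h1 : idxSet O y ∈ {r : ℕ | f (r, idxSet C i) ≠ 0} := by
            show f (idxSet O y, idxSet C i) ≠ 0
            rw [← h.2.2.2]; exact hy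
          have h2 : idxSet O o ∈ {r : ℕ | f (r, idxSet C i) ≠ 0} := by
            show f (idxSet O o, idxSet C i) ≠ 0
            rw [← mCO hoO hiC hoi]; exact hne
          have h3 := hcolsub (idxSet C i) h1 h2
          have h4 := congrArg (enumSet O) h3
          rw [(idxSet_spec h.1).2, (idxSet_spec hoO).2] at h4
          exact Fin.ext h4
  have hspm : IsSignedPermMatrix M := ⟨hvals, hrowu, col_exu_of_symm hsymm hrowu⟩
  have hFeq : {i : Fin n | M i i ≠ 0} = F := by
    ext i
    simp only [Set.mem_setOf_eq, mdiag i]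
    by_cases hiP : i ∈ P
    · simp [hiP, hPF hiP]
    · by_cases hiF : i ∈ F
      · simp [hiP, hiF]
      · simp [hiP, hiF]
  have hPeq : {i : Fin n | M i i = 1} = P := by
    ext i
    simp only [Set.mem_setOf_eq, mdiag i]
    by_cases hiP : i ∈ P
    · simp [hiP]
    · by_cases hiF : i ∈ F <;> simp [hiP, hiF]
  have hOeq : {i : Fin n | ∃ j, i < j ∧ M i j ≠ 0} = O := by
    ext i
    simp only [Set.mem_setOf_eq]
    constructor
    · rintro ⟨j, hij, hne⟩
      rcases hclass (ne_of_lt hij) hne with h | h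
      · exact h.1
      · exact absurd h.2.2.1 (lt_asymm hij)
    · intro hi
      obtain ⟨c, hic, _, hne⟩ := hOex i hi
      exact ⟨c, hic, hne⟩
  have havM : ¬ ContainsPattern M (primePat υ) := by
    rw [contains_primePat_iff hspm hsymm hυ]
    rintro ⟨r, c, hr, hc, hsep, hvalc⟩
    apply havoid
    have hrO : ∀ a, r a ∈ O := by
      intro a
      obtain ⟨b0, hb0, _⟩ := hυ.2.1 a
      have hne : M (r a) (c b0) ≠ 0 := by rw [hvalc]; exact hb0
      rcases hclass (ne_of_lt (hsep a b0)) hne with h | h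
      · exact h.1
      · exact absurd h.2.2.1 (lt_asymm (hsep a b0))
    have hcC : ∀ b, c b ∈ C := by
      intro b
      obtain ⟨a0, ha0, _⟩ := hυ.2.2 b
      have hne : M (r a0) (c b) ≠ 0 := by rw [hvalc]; exact ha0
      rcases hclass (ne_of_lt (hsep a0 b)) hne with h | h
      · exact h.2.1
      · exact absurd h.2.2.1 (lt_asymm (hsep a0 b))
    refine ⟨fun a => idxSet O (r a), fun b => idxSet C (c b), ?_, ?_, ?_, ?_⟩
    · intro a a' haa
      have h1 : enumSet O (idxSet O (r a)) < enumSet O (idxSet O (r a')) := by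
        rw [(idxSet_spec (hrO a)).2, (idxSet_spec (hrO a')).2]
        exact Fin.lt_def.mp (hr haa)
      exact (enumSet_strictMono O).lt_iff_lt.1 h1
    · intro b b' hbb
      have h1 : enumSet C (idxSet C (c b)) < enumSet C (idxSet C (c b')) := by
        rw [(idxSet_spec (hcC b)).2, (idxSet_spec (hcC b')).2]
        exact Fin.lt_def.mp (hc hbb)
      exact (enumSet_strictMono C).lt_iff_lt.1 h1
    · intro a b
      exact cell_of_mem (hrO a) (hcC b) (hsep a b)
    · intro a b
      rw [← mOC (hrO a) (hcC b) (hsep a b)]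
      exact hvalc a b
  have hfill : fillOf O C M = f := by
    funext p
    by_cases hp : p ∈ (shapeOf O C).cells
    · obtain ⟨o, c, ho, hc, hov, hcv, holt, he⟩ := fillOf_cell M hp
      rw [he, mOC ho hc holt, idxSet_eq ho hov.symm, idxSet_eq hc hcv.symm]
    · rw [fillOf, if_neg hp]
      by_contra h0
      exact hp (hsupp p (fun h => h0 h.symm))
  exact ⟨⟨hspm, hsymm, havM, hFeq, hPeq, hOeq⟩, hfill⟩

end BigBackward

section Assemble

open scoped Classical

variable {n k : ℕ}

lemma fiber_ncard_eq_transversal {υ : Matrix (Fin k) (Fin k) ℤ} (hυ : IsSignedPermMatrix υ)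
    {F P O : Set (Fin n)} (hPF : P ⊆ F) (hOF : ∀ i ∈ O, i ∉ F)
    (hv1 : ∀ o ∈ O, ∃ c ∈ Cset F O, o < c) (hv2 : ∀ c ∈ Cset F O, ∃ o ∈ O, o < c) :
    (Fiber υ F P O).ncard =
      {f : ℕ × ℕ → ℤ | NEIsSignedTransversal (shapeOf O (Cset F O)) f ∧
        ¬ NEContains (shapeOf O (Cset F O)) f υ}.ncard := by
  have himg : fillOf O (Cset F O) '' (Fiber υ F P O) =
      {f | NEIsSignedTransversal (shapeOf O (Cset F O)) f ∧
        ¬ NEContains (shapeOf O (Cset F O)) f υ} := by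
    ext f
    constructor
    · rintro ⟨M, hMf, rfl⟩
      obtain ⟨h1, h2, _⟩ := fiber_props hυ hMf
      exact ⟨h1, h2⟩
    · rintro ⟨h1, h2⟩
      obtain ⟨hmem, hfill⟩ := matOf_fiber hυ hPF hOF hv1 hv2 h1 h2
      exact ⟨matOf F P O f, hmem, hfill⟩
  have hinj : Set.InjOn (fillOf O (Cset F O)) (Fiber υ F P O) := by
    intro M1 h1 M2 h2 he
    have r1 := (fiber_props hυ h1).2.2
    have r2 := (fiber_props hυ h2).2.2
    rw [← r1, ← r2, he]
  rw [← himg, Set.ncard_image_of_injOn hinj]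

lemma fiber_card_eq {σ τ : Matrix (Fin k) (Fin k) ℤ}
    (hσ : IsSignedPermMatrix σ) (hτ : IsSignedPermMatrix τ) (heq : NEShapeWilfEquiv σ τ)
    (F P O : Set (Fin n)) : (Fiber σ F P O).ncard = (Fiber τ F P O).ncard := by
  by_cases hv : P ⊆ F ∧ (∀ i ∈ O, i ∉ F) ∧ (∀ o ∈ O, ∃ c ∈ Cset F O, o < c) ∧
      (∀ c ∈ Cset F O, ∃ o ∈ O, o < c)
  · rw [fiber_ncard_eq_transversal hσ hv.1 hv.2.1 hv.2.2.1 hv.2.2.2,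
      fiber_ncard_eq_transversal hτ hv.1 hv.2.1 hv.2.2.1 hv.2.2.2]
    exact heq (shapeOf O (Cset F O))
  · have h1 : Fiber σ F P O = ∅ := by
      rw [Set.eq_empty_iff_forall_notMem]
      intro M hMf
      exact hv (valid_of_fiber hMf)
    have h2 : Fiber τ F P O = ∅ := by
      rw [Set.eq_empty_iff_forall_notMem]
      intro M hMf
      exact hv (valid_of_fiber hMf)
    rw [h1, h2]

lemma Aset_card_eq {σ τ : Matrix (Fin k) (Fin k) ℤ}
    (hσ : IsSignedPermMatrix σ) (hτ : IsSignedPermMatrix τ) (heq : NEShapeWilfEquiv σ τ)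
    (F : Set (Fin n)) :
    {M : Matrix (Fin n) (Fin n) ℤ | IsSignedPermMatrix M ∧ M.IsSymm ∧
      ¬ ContainsPattern M (primePat σ) ∧ {i | M i i ≠ 0} = F}.ncard =
    {M : Matrix (Fin n) (Fin n) ℤ | IsSignedPermMatrix M ∧ M.IsSymm ∧
      ¬ ContainsPattern M (primePat τ) ∧ {i | M i i ≠ 0} = F}.ncard := by
  set g : Matrix (Fin n) (Fin n) ℤ → Set (Fin n) × Set (Fin n) :=
    fun M => ({i | M i i = 1}, {i | ∃ j, i < j ∧ M i j ≠ 0}) with hg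
  have key : ∀ (υ : Matrix (Fin k) (Fin k) ℤ) (PO : Set (Fin n) × Set (Fin n)),
      {M : Matrix (Fin n) (Fin n) ℤ | IsSignedPermMatrix M ∧ M.IsSymm ∧
          ¬ ContainsPattern M (primePat υ) ∧ {i | M i i ≠ 0} = F}
        ∩ g ⁻¹' {PO} = Fiber υ F PO.1 PO.2 := by
    intro υ PO
    ext M
    simp only [Set.mem_inter_iff, Set.mem_setOf_eq, Set.mem_preimage, Set.mem_singleton_iff,
      Fiber, hg, Prod.ext_iff]
    tauto
  have fin1 : {M : Matrix (Fin n) (Fin n) ℤ | IsSignedPermMatrix M ∧ M.IsSymm ∧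
      ¬ ContainsPattern M (primePat σ) ∧ {i | M i i ≠ 0} = F}.Finite :=
    spm_setFinite _ (fun M hM => hM.1)
  have fin2 : {M : Matrix (Fin n) (Fin n) ℤ | IsSignedPermMatrix M ∧ M.IsSymm ∧
      ¬ ContainsPattern M (primePat τ) ∧ {i | M i i ≠ 0} = F}.Finite :=
    spm_setFinite _ (fun M hM => hM.1)
  rw [ncard_eq_sum_fibers fin1 g, ncard_eq_sum_fibers fin2 g]
  refine Finset.sum_congr rfl fun PO _ => ?_
  rw [key σ PO, key τ PO]
  exact fiber_card_eq hσ hτ heq F PO.1 PO.2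

end Assemble
/-- if σ and τ are NE-shape Wilf equivalent signed permutation matrices,
then for every n ≥ 1 and every set F of positions, the σ'-avoiding signed involutions
in SI_n with fixed-point set F are equinumerous with the τ'-avoiding ones;
in particular |SI_n(σ')| = |SI_n(τ')|. -/

theorem stmt1 {k : ℕ} (σ τ : Matrix (Fin k) (Fin k) ℤ)
    (hσ : IsSignedPermMatrix σ) (hτ : IsSignedPermMatrix τ)
    (heq : NEShapeWilfEquiv σ τ) :
    ∀ n : ℕ, 1 ≤ n →
      (∀ F : Set (Fin n),
        {M : Matrix (Fin n) (Fin n) ℤ | IsSignedPermMatrix M ∧ M.IsSymm ∧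
          ¬ ContainsPattern M (primePat σ) ∧ {i | M i i ≠ 0} = F}.ncard =
        {M : Matrix (Fin n) (Fin n) ℤ | IsSignedPermMatrix M ∧ M.IsSymm ∧
          ¬ ContainsPattern M (primePat τ) ∧ {i | M i i ≠ 0} = F}.ncard) ∧
      SIAvoidCount n (primePat σ) = SIAvoidCount n (primePat τ) := by
  intro n _
  refine ⟨fun F => Aset_card_eq hσ hτ heq F, ?_⟩
  classical
  rw [SIAvoidCount, SIAvoidCount]
  set d : Matrix (Fin n) (Fin n) ℤ → Set (Fin n) := fun M => {i | M i i ≠ 0} with hd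
  have fin1 : {M : Matrix (Fin n) (Fin n) ℤ | IsSignedPermMatrix M ∧ M.IsSymm ∧
      ¬ ContainsPattern M (primePat σ)}.Finite := spm_setFinite _ (fun M hM => hM.1)
  have fin2 : {M : Matrix (Fin n) (Fin n) ℤ | IsSignedPermMatrix M ∧ M.IsSymm ∧
      ¬ ContainsPattern M (primePat τ)}.Finite := spm_setFinite _ (fun M hM => hM.1)
  rw [ncard_eq_sum_fibers fin1 d, ncard_eq_sum_fibers fin2 d]
  refine Finset.sum_congr rfl fun F _ => ?_
  have e : ∀ (υ : Matrix (Fin (k + k)) (Fin (k + k)) ℤ),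
      {M : Matrix (Fin n) (Fin n) ℤ | IsSignedPermMatrix M ∧ M.IsSymm ∧
        ¬ ContainsPattern M υ} ∩ d ⁻¹' {F} =
      {M : Matrix (Fin n) (Fin n) ℤ | IsSignedPermMatrix M ∧ M.IsSymm ∧
        ¬ ContainsPattern M υ ∧ {i | M i i ≠ 0} = F} := by
    intro υ
    ext M
    simp only [Set.mem_inter_iff, Set.mem_setOf_eq, Set.mem_preimage, Set.mem_singleton_iff, hd]
    tauto
  rw [e (primePat σ), e (primePat τ)]
  exact Aset_card_eq hσ hτ heq F
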